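/- Let G be a finite group acting unitarily on H_R and H_S, τ a density matrix on H_R, σ a density matrix on H_S, and let Σ^{CRS} = (1/|G|)·Σ_{g∈G} |g⟩⟨g|^C ⊗ U_g^R τ (U_g^R)† ⊗ U_g^S σ (U_g^S)† be the classical-quantum state on C⊗R⊗S where {|g⟩ : g∈G} is an orthonormal basis of ℂ^{|G|}. Then the mutual information I(C:R)_Σ between C and R equals Γ(τ) = S(𝒢(τ)) - S(τ). -/

import Mathlib

open Matrix
open scoped Kronecker ComplexOrder
open scoped Classical

variable {n : Type*} [Fintype n] [DecidableEq n]

/-- Density matrix predicate -/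
def IsDensityMatrix (ρ : Matrix n n ℂ) : Prop := ρ.PosSemidef ∧ ρ.trace = 1

/-- von Neumann entropy, base 2 -/
noncomputable def vnEntropy (A : Matrix n n ℂ) : ℝ :=
  if h : A.IsHermitian then -∑ i, h.eigenvalues i * Real.logb 2 (h.eigenvalues i) else 0

/-- twirl over a finite group -/
noncomputable def twirl {G : Type*} [Group G] [Fintype G]
    (U : G →* Matrix.unitaryGroup n ℂ) (ρ : Matrix n n ℂ) : Matrix n n ℂ :=
  (Fintype.card G : ℂ)⁻¹ • ∑ g : G, (U g : Matrix n n ℂ) * ρ * star (U g : Matrix n n ℂ)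

/-- relative entropy of asymmetry -/
noncomputable def relEntAsym {G : Type*} [Group G] [Fintype G]
    (U : G →* Matrix.unitaryGroup n ℂ) (ρ : Matrix n n ℂ) : ℝ :=
  vnEntropy (twirl U ρ) - vnEntropy ρ

/-- the square root of a PSD matrix, as `Matrix.PosSemidef.sqrt` was defined in Mathlib (Dec 2024) -/
noncomputable def Matrix.PosSemidef.sqrt {m : Type*} [Fintype m] [DecidableEq m] {𝕜 : Type*} [RCLike 𝕜]
    {A : Matrix m m 𝕜} (hA : A.PosSemidef) : Matrix m m 𝕜 :=
  (hA.1.eigenvectorUnitary : Matrix m m 𝕜) * diagonal ((↑) ∘ (√·) ∘ hA.1.eigenvalues) *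
    (star hA.1.eigenvectorUnitary : Matrix m m 𝕜)

/-- square root of a PSD matrix (0 otherwise) -/
noncomputable def sqrtPSD (A : Matrix n n ℂ) : Matrix n n ℂ :=
  if h : A.PosSemidef then h.sqrt else 0

/-- trace norm -/
noncomputable def traceNorm (A : Matrix n n ℂ) : ℝ :=
  ((Matrix.posSemidef_conjTranspose_mul_self A).sqrt.trace).re

/-- fidelity F(ρ,σ) = ‖√ρ√σ‖₁ -/
noncomputable def fidelity (ρ σ : Matrix n n ℂ) : ℝ := traceNorm (sqrtPSD ρ * sqrtPSD σ)

/-- binary entropy, base 2 -/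
noncomputable def binEntropy2 (x : ℝ) : ℝ := -x * Real.logb 2 x - (1-x) * Real.logb 2 (1-x)

/-- matrix logarithm (base 2) of a Hermitian matrix -/
noncomputable def matLogb (A : Matrix n n ℂ) : Matrix n n ℂ :=
  if h : A.IsHermitian then
    (h.eigenvectorUnitary : Matrix n n ℂ) *
      Matrix.diagonal (fun i => (Real.logb 2 (h.eigenvalues i) : ℂ)) *
      star (h.eigenvectorUnitary : Matrix n n ℂ)
  else 0

/-- quantum relative entropy, +∞ if support condition fails -/
noncomputable def relEntropy (ρ σ : Matrix n n ℂ) : EReal :=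
  if ∀ v : n → ℂ, σ *ᵥ v = 0 → ρ *ᵥ v = 0 then
    (((ρ * (matLogb ρ - matLogb σ)).trace).re : EReal)
  else ⊤

/-- complete positivity -/
def IsCompletelyPositive {m : Type*} [Fintype m] [DecidableEq m]
    (Φ : Matrix n n ℂ →ₗ[ℂ] Matrix m m ℂ) : Prop :=
  ∀ (k : ℕ) (M : Matrix (Fin k × n) (Fin k × n) ℂ), M.PosSemidef →
    (Matrix.of fun p q : Fin k × m =>
      (Φ (Matrix.of fun a b => M (p.1, a) (q.1, b))) p.2 q.2).PosSemidef

/-- CPTP map -/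
def IsQuantumChannel {m : Type*} [Fintype m] [DecidableEq m]
    (Φ : Matrix n n ℂ →ₗ[ℂ] Matrix m m ℂ) : Prop :=
  IsCompletelyPositive Φ ∧ ∀ A, (Φ A).trace = A.trace

/-- G-covariance of a map between systems with representations U, V -/
def IsCovariant {m : Type*} [Fintype m] [DecidableEq m] {G : Type*} [Group G]
    (U : G →* Matrix.unitaryGroup n ℂ) (V : G →* Matrix.unitaryGroup m ℂ)
    (Φ : Matrix n n ℂ →ₗ[ℂ] Matrix m m ℂ) : Prop :=
  ∀ g A, Φ ((U g : Matrix n n ℂ) * A * star (U g : Matrix n n ℂ))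
    = (V g : Matrix m m ℂ) * Φ A * star (V g : Matrix m m ℂ)

/-- the classical-quantum state Σ^{CRS} -/
noncomputable def SigmaCRS {nR nS G : Type*} [Fintype nR] [DecidableEq nR] [Fintype nS] [DecidableEq nS]
    [Group G] [Fintype G] [DecidableEq G]
    (U : G →* Matrix.unitaryGroup nR ℂ) (V : G →* Matrix.unitaryGroup nS ℂ)
    (τ : Matrix nR nR ℂ) (σ : Matrix nS nS ℂ) :
    Matrix (G × nR × nS) (G × nR × nS) ℂ :=
  Matrix.of fun x y =>
    if x.1 = y.1 then
      (Fintype.card G : ℂ)⁻¹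
        * (((U x.1 : Matrix nR nR ℂ) * τ * star (U x.1 : Matrix nR nR ℂ)) x.2.1 y.2.1)
        * (((V x.1 : Matrix nS nS ℂ) * σ * star (V x.1 : Matrix nS nS ℂ)) x.2.2 y.2.2)
    else 0

section Aux
open Polynomial

private lemma charpoly_unitary_diag {m : Type*} [Fintype m] [DecidableEq m]
    (W : Matrix m m ℂ) (hW : W * star W = 1) (d : m → ℂ) :
    (W * Matrix.diagonal d * star W).charpoly = ∏ i, (X - C (d i)) := by
  have hmap : ∀ (A B : Matrix m m ℂ), (A * B).map (C : ℂ →+* ℂ[X]) = A.map C * B.map C :=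
    fun A B => Matrix.map_mul
  have hone : (W.map (C : ℂ →+* ℂ[X])) * ((star W).map C) = 1 := by
    rw [← hmap, hW]; ext i j; simp [Matrix.map_apply, Matrix.one_apply, apply_ite]
  have hchar : Matrix.charmatrix (W * Matrix.diagonal d * star W)
      = W.map (C : ℂ →+* ℂ[X]) * Matrix.charmatrix (Matrix.diagonal d) * (star W).map C := by
    show Matrix.scalar m (X : ℂ[X]) - (C : ℂ →+* ℂ[X]).mapMatrix (W * Matrix.diagonal d * star W)
      = W.map C * (Matrix.scalar m (X : ℂ[X]) - (C : ℂ →+* ℂ[X]).mapMatrix (Matrix.diagonal d)) * (star W).map C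
    simp only [RingHom.mapMatrix_apply]
    rw [Matrix.mul_sub, Matrix.sub_mul, hmap, hmap]
    congr 1
    · have hc : W.map (C : ℂ →+* ℂ[X]) * Matrix.scalar m (X : ℂ[X])
          = Matrix.scalar m (X : ℂ[X]) * W.map C :=
        (Matrix.scalar_commute (X : ℂ[X]) (fun r => Commute.all _ _) (W.map C)).symm
      rw [hc, Matrix.mul_assoc, hone, Matrix.mul_one]
  have hdiag : Matrix.charmatrix (Matrix.diagonal d) = Matrix.diagonal (fun i => (X : ℂ[X]) - C (d i)) := by
    ext i j
    by_cases h : i = j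
    · subst h; simp
    · simp [h, Matrix.charmatrix_apply_ne _ _ _ h, Matrix.diagonal_apply_ne _ h]
  have hdet1 : (W.map (C : ℂ →+* ℂ[X])).det * ((star W).map (C : ℂ →+* ℂ[X])).det = 1 := by
    rw [← Matrix.det_mul, hone, Matrix.det_one]
  rw [Matrix.charpoly, hchar, Matrix.det_mul, Matrix.det_mul, hdiag, Matrix.det_diagonal]
  calc (W.map (C : ℂ →+* ℂ[X])).det * (∏ i, ((X : ℂ[X]) - C (d i))) * ((star W).map C).det
      = (W.map (C : ℂ →+* ℂ[X])).det * ((star W).map C).det * ∏ i, ((X : ℂ[X]) - C (d i)) := by ring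
    _ = ∏ i, ((X : ℂ[X]) - C (d i)) := by rw [hdet1, one_mul]

private lemma eig_multiset {m : Type*} [Fintype m] [DecidableEq m]
    {A : Matrix m m ℂ} (hA : A.IsHermitian) (W : Matrix m m ℂ) (hW : W * star W = 1)
    (d : m → ℝ) (hAd : A = W * Matrix.diagonal (fun i => (d i : ℂ)) * star W) :
    Multiset.map hA.eigenvalues Finset.univ.val = Multiset.map d Finset.univ.val := by
  have hWe : (hA.eigenvectorUnitary : Matrix m m ℂ) * star (hA.eigenvectorUnitary : Matrix m m ℂ) = 1 :=
    Matrix.mem_unitaryGroup_iff.mp hA.eigenvectorUnitary.2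
  have h1 : A.charpoly = ∏ i, (X - C ((d i : ℂ))) := by
    conv_lhs => rw [hAd]
    exact charpoly_unitary_diag W hW (fun i => (d i : ℂ))
  have h2 : A.charpoly = ∏ i, (X - C ((hA.eigenvalues i : ℂ))) := by
    conv_lhs => rw [hA.spectral_theorem]
    exact charpoly_unitary_diag _ hWe (fun i => (hA.eigenvalues i : ℂ))
  have key : ∀ (v : m → ℝ), (∏ i, ((X:ℂ[X]) - C ((v i : ℂ)))).roots
      = Multiset.map (fun i => ((v i : ℝ) : ℂ)) Finset.univ.val := by
    intro v
    have h0 := roots_multiset_prod_X_sub_C (Finset.univ.val.map (fun i => ((v i : ℝ) : ℂ)))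
    rw [Multiset.map_map] at h0
    rw [Finset.prod_eq_multiset_prod]
    exact h0
  have h3 : Multiset.map (fun i => ((hA.eigenvalues i : ℝ) : ℂ)) Finset.univ.val
      = Multiset.map (fun i => ((d i : ℝ) : ℂ)) Finset.univ.val := by
    rw [← key, ← key, ← h1, ← h2]
  have h4 : Multiset.map Complex.ofReal (Multiset.map hA.eigenvalues Finset.univ.val)
      = Multiset.map Complex.ofReal (Multiset.map d Finset.univ.val) := by
    rw [Multiset.map_map, Multiset.map_map]; exact h3
  exact Multiset.map_injective Complex.ofReal_injective h4

private lemma sum_f_eigenvalues {m : Type*} [Fintype m] [DecidableEq m]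
    {A : Matrix m m ℂ} (hA : A.IsHermitian) (W : Matrix m m ℂ) (hW : W * star W = 1)
    (d : m → ℝ) (hAd : A = W * Matrix.diagonal (fun i => (d i : ℂ)) * star W) (f : ℝ → ℝ) :
    ∑ i, f (hA.eigenvalues i) = ∑ i, f (d i) := by
  have h := eig_multiset hA W hW d hAd
  calc ∑ i, f (hA.eigenvalues i)
      = ((Finset.univ.val.map hA.eigenvalues).map f).sum := by
        rw [Multiset.map_map]; rfl
    _ = ((Finset.univ.val.map d).map f).sum := by rw [h]
    _ = ∑ i, f (d i) := by rw [Multiset.map_map]; rfl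

private lemma trace_unitary_diag {m : Type*} [Fintype m] [DecidableEq m]
    (W : Matrix m m ℂ) (hW : W * star W = 1) (d : m → ℂ) :
    (W * Matrix.diagonal d * star W).trace = ∑ i, d i := by
  rw [Matrix.trace_mul_cycle, mul_eq_one_comm.mp hW, Matrix.one_mul,
    Matrix.trace_diagonal]

private lemma isHermitian_udu {m : Type*} [Fintype m] [DecidableEq m]
    (W : Matrix m m ℂ) (d : m → ℝ) :
    (W * Matrix.diagonal (fun i => (d i : ℂ)) * star W).IsHermitian := by
  have hd : (Matrix.diagonal (fun i => ((d i : ℝ) : ℂ))).IsHermitian := by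
    have hs : (star fun i => ((d i : ℝ) : ℂ)) = fun i => ((d i : ℝ) : ℂ) :=
      funext fun i => Complex.conj_ofReal (d i)
    rw [Matrix.IsHermitian, Matrix.diagonal_conjTranspose, hs]
  rw [Matrix.IsHermitian, Matrix.conjTranspose_mul, Matrix.conjTranspose_mul,
    Matrix.star_eq_conjTranspose, Matrix.conjTranspose_conjTranspose, hd, Matrix.mul_assoc]

private noncomputable def blk {G R : Type*} [DecidableEq G] (B : G → Matrix R R ℂ) :
    Matrix (G × R) (G × R) ℂ :=
  Matrix.of fun p q => if p.1 = q.1 then B p.1 p.2 q.2 else 0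

private lemma blk_mul {G R : Type*} [DecidableEq G] [Fintype G] [Fintype R]
    (B C : G → Matrix R R ℂ) : blk B * blk C = blk (fun g => B g * C g) := by
  ext ⟨g, r⟩ ⟨g', r'⟩
  simp only [blk, Matrix.mul_apply, Matrix.of_apply, Fintype.sum_prod_type, ite_mul, mul_ite,
    zero_mul, mul_zero]
  by_cases h : g = g'
  · subst h
    simp
  · simp [h]

private lemma blk_star {G R : Type*} [DecidableEq G] (B : G → Matrix R R ℂ) :
    star (blk B) = blk (fun g => star (B g)) := by
  ext ⟨g, r⟩ ⟨g', r'⟩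
  simp only [blk, Matrix.star_eq_conjTranspose, Matrix.conjTranspose_apply, Matrix.of_apply]
  by_cases h : g = g'
  · subst h; simp [Matrix.conjTranspose_apply]
  · simp [h, Ne.symm h]

private lemma blk_one {G R : Type*} [DecidableEq G] [DecidableEq R] :
    blk (fun _ : G => (1 : Matrix R R ℂ)) = 1 := by
  ext ⟨g, r⟩ ⟨g', r'⟩
  simp [blk, Matrix.one_apply, Prod.ext_iff, ite_and]

private lemma blk_diagonal {G R : Type*} [DecidableEq G] [DecidableEq R] (v : G → R → ℂ) :
    blk (fun g => Matrix.diagonal (v g)) = Matrix.diagonal (fun p : G × R => v p.1 p.2) := by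
  ext ⟨g, r⟩ ⟨g', r'⟩
  by_cases h : g = g'
  · subst h
    by_cases h2 : r = r'
    · subst h2; simp [blk]
    · simp [blk, Matrix.diagonal_apply_ne, h2, Prod.ext_iff]
  · simp [blk, h, Matrix.diagonal_apply_ne, Prod.ext_iff]

private lemma xlogx_smul {a t : ℝ} (ha : 0 < a) (ht : 0 ≤ t) :
    (a * t) * Real.logb 2 (a * t)
      = a * (t * Real.logb 2 t) + (a * Real.logb 2 a) * t := by
  rcases eq_or_lt_of_le ht with h | h
  · simp [← h]
  · rw [Real.logb_mul (ne_of_gt ha) (ne_of_gt h)]; ring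

end Aux

theorem mutualInfo_CR_eq_relEntAsym {nR nS G : Type*} [Fintype nR] [DecidableEq nR]
    [Fintype nS] [DecidableEq nS] [Group G] [Fintype G] [DecidableEq G]
    (U : G →* Matrix.unitaryGroup nR ℂ) (V : G →* Matrix.unitaryGroup nS ℂ)
    (τ : Matrix nR nR ℂ) (σ : Matrix nS nS ℂ)
    (hτ : IsDensityMatrix τ) (hσ : IsDensityMatrix σ) :
    vnEntropy (Matrix.of fun g g' : G => ∑ r : nR, ∑ s : nS,
        SigmaCRS U V τ σ (g, r, s) (g', r, s))
      + vnEntropy (Matrix.of fun r r' : nR => ∑ g : G, ∑ s : nS,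
        SigmaCRS U V τ σ (g, r, s) (g, r', s))
      - vnEntropy (Matrix.of fun p q : G × nR => ∑ s : nS,
        SigmaCRS U V τ σ (p.1, p.2, s) (q.1, q.2, s))
      = relEntAsym U τ := by
  classical
  have hτh : τ.IsHermitian := hτ.1.1
  have hN0 : 0 < Fintype.card G := Fintype.card_pos
  have hNR : ((Fintype.card G : ℕ) : ℝ) ≠ 0 := Nat.cast_ne_zero.mpr hN0.ne'
  have hNC : (((Fintype.card G : ℝ)⁻¹ : ℝ) : ℂ) = ((Fintype.card G : ℕ) : ℂ)⁻¹ := by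
    push_cast; ring
  have hUu : ∀ g : G, (U g : Matrix nR nR ℂ) * star (U g : Matrix nR nR ℂ) = 1 :=
    fun g => Matrix.mem_unitaryGroup_iff.mp (U g).2
  have hVu : ∀ g : G, (V g : Matrix nS nS ℂ) * star (V g : Matrix nS nS ℂ) = 1 :=
    fun g => Matrix.mem_unitaryGroup_iff.mp (V g).2
  have htrU : ∀ g : G,
      ∑ r : nR, ((U g : Matrix nR nR ℂ) * τ * star (U g : Matrix nR nR ℂ)) r r = 1 := by
    intro g
    have h1 : ((U g : Matrix nR nR ℂ) * τ * star (U g : Matrix nR nR ℂ)).trace = τ.trace := by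
      rw [Matrix.trace_mul_cycle, mul_eq_one_comm.mp (hUu g), Matrix.one_mul]
    have h2 := h1.trans hτ.2
    simpa [Matrix.trace, Matrix.diag] using h2
  have htrV : ∀ g : G,
      ∑ s : nS, ((V g : Matrix nS nS ℂ) * σ * star (V g : Matrix nS nS ℂ)) s s = 1 := by
    intro g
    have h1 : ((V g : Matrix nS nS ℂ) * σ * star (V g : Matrix nS nS ℂ)).trace = σ.trace := by
      rw [Matrix.trace_mul_cycle, mul_eq_one_comm.mp (hVu g), Matrix.one_mul]
    have h2 := h1.trans hσ.2
    simpa [Matrix.trace, Matrix.diag] using h2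
  -- the C marginal
  have eAC : (Matrix.of fun g g' : G => ∑ r : nR, ∑ s : nS,
        SigmaCRS U V τ σ (g, r, s) (g', r, s))
      = Matrix.diagonal (fun _ : G => (((Fintype.card G : ℝ)⁻¹ : ℝ) : ℂ)) := by
    ext g g'
    by_cases h : g = g'
    · subst h
      simp only [Matrix.of_apply, SigmaCRS, eq_self_iff_true, if_true, Matrix.diagonal_apply_eq]
      have h1 : ∀ r : nR, ∑ s : nS, ((Fintype.card G : ℕ) : ℂ)⁻¹
            * (((U g : Matrix nR nR ℂ) * τ * star (U g : Matrix nR nR ℂ)) r r)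
            * (((V g : Matrix nS nS ℂ) * σ * star (V g : Matrix nS nS ℂ)) s s)
          = ((Fintype.card G : ℕ) : ℂ)⁻¹
            * (((U g : Matrix nR nR ℂ) * τ * star (U g : Matrix nR nR ℂ)) r r) := by
        intro r
        rw [← Finset.mul_sum, htrV g, mul_one]
      rw [Finset.sum_congr rfl fun r _ => h1 r, ← Finset.mul_sum, htrU g, mul_one, hNC]
    · simp [SigmaCRS, h, Matrix.diagonal_apply_ne _ h]
  have eAC1 : Matrix.diagonal (fun _ : G => (((Fintype.card G : ℝ)⁻¹ : ℝ) : ℂ))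
      = (1 : Matrix G G ℂ)
        * Matrix.diagonal (fun _ : G => (((Fintype.card G : ℝ)⁻¹ : ℝ) : ℂ))
        * star (1 : Matrix G G ℂ) := by
    simp
  have hACh : (Matrix.diagonal (fun _ : G => (((Fintype.card G : ℝ)⁻¹ : ℝ) : ℂ))).IsHermitian := by
    rw [eAC1]; exact isHermitian_udu _ _
  have hSC : vnEntropy (Matrix.diagonal (fun _ : G => (((Fintype.card G : ℝ)⁻¹ : ℝ) : ℂ)))
      = Real.logb 2 (Fintype.card G) := by
    simp only [vnEntropy]
    rw [dif_pos hACh]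
    have hsum : (∑ g : G, hACh.eigenvalues g * Real.logb 2 (hACh.eigenvalues g))
        = ∑ _g : G, (Fintype.card G : ℝ)⁻¹ * Real.logb 2 (Fintype.card G : ℝ)⁻¹ :=
      sum_f_eigenvalues hACh 1 (by simp) (fun _ => (Fintype.card G : ℝ)⁻¹) eAC1
        (fun x => x * Real.logb 2 x)
    rw [hsum, Finset.sum_const, Finset.card_univ, nsmul_eq_mul, Real.logb_inv]
    field_simp
  -- the R marginal
  have eAR : (Matrix.of fun r r' : nR => ∑ g : G, ∑ s : nS,
        SigmaCRS U V τ σ (g, r, s) (g, r', s)) = twirl U τ := by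
    ext r r'
    simp only [Matrix.of_apply, SigmaCRS, eq_self_iff_true, if_true]
    have h1 : ∀ g : G, ∑ s : nS, ((Fintype.card G : ℕ) : ℂ)⁻¹
          * (((U g : Matrix nR nR ℂ) * τ * star (U g : Matrix nR nR ℂ)) r r')
          * (((V g : Matrix nS nS ℂ) * σ * star (V g : Matrix nS nS ℂ)) s s)
        = ((Fintype.card G : ℕ) : ℂ)⁻¹
          * (((U g : Matrix nR nR ℂ) * τ * star (U g : Matrix nR nR ℂ)) r r') := by
      intro g; rw [← Finset.mul_sum, htrV g, mul_one]
    rw [Finset.sum_congr rfl fun g _ => h1 g, ← Finset.mul_sum, twirl]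
    simp [Matrix.sum_apply]
  -- the CR marginal
  have hlam0 : ∀ i, 0 ≤ hτh.eigenvalues i := fun i => hτ.1.eigenvalues_nonneg i
  have hWτu : (hτh.eigenvectorUnitary : Matrix nR nR ℂ)
      * star (hτh.eigenvectorUnitary : Matrix nR nR ℂ) = 1 :=
    Matrix.mem_unitaryGroup_iff.mp hτh.eigenvectorUnitary.2
  have hτdec : τ = (hτh.eigenvectorUnitary : Matrix nR nR ℂ)
      * Matrix.diagonal (fun i => ((hτh.eigenvalues i : ℝ) : ℂ))
      * star (hτh.eigenvectorUnitary : Matrix nR nR ℂ) := hτh.spectral_theorem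
  have hsum1 : ∑ i : nR, hτh.eigenvalues i = 1 := by
    have h1 : τ.trace = ∑ i : nR, ((hτh.eigenvalues i : ℝ) : ℂ) := by
      conv_lhs => rw [hτdec]
      exact trace_unitary_diag _ hWτu _
    have h2 : ((∑ i : nR, hτh.eigenvalues i : ℝ) : ℂ) = 1 := by
      push_cast
      rw [← h1, hτ.2]
    exact_mod_cast h2
  have eACR : (Matrix.of fun p q : G × nR => ∑ s : nS,
        SigmaCRS U V τ σ (p.1, p.2, s) (q.1, q.2, s))
      = blk (fun g : G => ((Fintype.card G : ℕ) : ℂ)⁻¹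
          • ((U g : Matrix nR nR ℂ) * τ * star (U g : Matrix nR nR ℂ))) := by
    ext ⟨g, r⟩ ⟨g', r'⟩
    simp only [Matrix.of_apply, SigmaCRS, blk]
    by_cases h : g = g'
    · subst h
      simp only [eq_self_iff_true, if_true]
      rw [← Finset.mul_sum, htrV g, mul_one]
      simp
    · simp [h]
  have hWbu : blk (fun g : G => (U g : Matrix nR nR ℂ)
        * (hτh.eigenvectorUnitary : Matrix nR nR ℂ))
      * star (blk (fun g : G => (U g : Matrix nR nR ℂ)
        * (hτh.eigenvectorUnitary : Matrix nR nR ℂ))) = 1 := by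
    rw [blk_star, blk_mul, ← blk_one (G := G) (R := nR)]
    refine congrArg blk (funext fun g => ?_)
    show ((U g : Matrix nR nR ℂ) * (hτh.eigenvectorUnitary : Matrix nR nR ℂ))
        * star ((U g : Matrix nR nR ℂ) * (hτh.eigenvectorUnitary : Matrix nR nR ℂ)) = 1
    rw [Matrix.star_mul, Matrix.mul_assoc,
      ← Matrix.mul_assoc (hτh.eigenvectorUnitary : Matrix nR nR ℂ), hWτu, Matrix.one_mul, hUu g]
  have hACRd : blk (fun g : G => ((Fintype.card G : ℕ) : ℂ)⁻¹
        • ((U g : Matrix nR nR ℂ) * τ * star (U g : Matrix nR nR ℂ)))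
      = blk (fun g : G => (U g : Matrix nR nR ℂ) * (hτh.eigenvectorUnitary : Matrix nR nR ℂ))
        * Matrix.diagonal (fun p : G × nR =>
            (((Fintype.card G : ℝ)⁻¹ * hτh.eigenvalues p.2 : ℝ) : ℂ))
        * star (blk (fun g : G => (U g : Matrix nR nR ℂ)
            * (hτh.eigenvectorUnitary : Matrix nR nR ℂ))) := by
    rw [blk_star, ← blk_diagonal (fun (g : G) (r : nR) =>
      (((Fintype.card G : ℝ)⁻¹ * hτh.eigenvalues r : ℝ) : ℂ)), blk_mul, blk_mul]
    refine congrArg blk (funext fun g => ?_)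
    show ((Fintype.card G : ℕ) : ℂ)⁻¹ • ((U g : Matrix nR nR ℂ) * τ * star (U g : Matrix nR nR ℂ))
      = ((U g : Matrix nR nR ℂ) * (hτh.eigenvectorUnitary : Matrix nR nR ℂ))
        * Matrix.diagonal (fun r : nR => (((Fintype.card G : ℝ)⁻¹ * hτh.eigenvalues r : ℝ) : ℂ))
        * star ((U g : Matrix nR nR ℂ) * (hτh.eigenvectorUnitary : Matrix nR nR ℂ))
    have hdg : Matrix.diagonal (fun r : nR =>
          (((Fintype.card G : ℝ)⁻¹ * hτh.eigenvalues r : ℝ) : ℂ))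
        = ((Fintype.card G : ℕ) : ℂ)⁻¹
          • Matrix.diagonal (fun i => ((hτh.eigenvalues i : ℝ) : ℂ)) := by
      ext i j
      by_cases hij : i = j
      · subst hij
        simp only [Matrix.diagonal_apply_eq, Matrix.smul_apply, smul_eq_mul]
        push_cast
        ring
      · simp [Matrix.diagonal_apply_ne _ hij]
    conv_lhs => rw [hτdec]
    rw [hdg, Matrix.star_mul, mul_smul_comm, smul_mul_assoc]
    congr 1
    simp only [Matrix.mul_assoc]
  have hACRh : (blk (fun g : G => ((Fintype.card G : ℕ) : ℂ)⁻¹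
      • ((U g : Matrix nR nR ℂ) * τ * star (U g : Matrix nR nR ℂ)))).IsHermitian := by
    rw [hACRd]; exact isHermitian_udu _ _
  have hSCR : vnEntropy (blk (fun g : G => ((Fintype.card G : ℕ) : ℂ)⁻¹
        • ((U g : Matrix nR nR ℂ) * τ * star (U g : Matrix nR nR ℂ))))
      = Real.logb 2 (Fintype.card G) + vnEntropy τ := by
    simp only [vnEntropy]
    rw [dif_pos hACRh, dif_pos hτh]
    have hsum : (∑ p : G × nR, hACRh.eigenvalues p * Real.logb 2 (hACRh.eigenvalues p))
        = ∑ p : G × nR, ((Fintype.card G : ℝ)⁻¹ * hτh.eigenvalues p.2)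
            * Real.logb 2 ((Fintype.card G : ℝ)⁻¹ * hτh.eigenvalues p.2) :=
      sum_f_eigenvalues hACRh _ hWbu
        (fun p : G × nR => (Fintype.card G : ℝ)⁻¹ * hτh.eigenvalues p.2) hACRd
        (fun x => x * Real.logb 2 x)
    rw [hsum, Fintype.sum_prod_type]
    have hpt : ∀ (g : G) (r : nR),
        ((Fintype.card G : ℝ)⁻¹ * hτh.eigenvalues (g, r).2)
            * Real.logb 2 ((Fintype.card G : ℝ)⁻¹ * hτh.eigenvalues (g, r).2)
        = (Fintype.card G : ℝ)⁻¹ * (hτh.eigenvalues r * Real.logb 2 (hτh.eigenvalues r))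
          + ((Fintype.card G : ℝ)⁻¹ * Real.logb 2 (Fintype.card G : ℝ)⁻¹)
            * hτh.eigenvalues r := by
      intro g r
      exact xlogx_smul (inv_pos.mpr (by exact_mod_cast hN0)) (hlam0 r)
    have hinner : ∀ g : G,
        (∑ r : nR, ((Fintype.card G : ℝ)⁻¹ * hτh.eigenvalues (g, r).2)
            * Real.logb 2 ((Fintype.card G : ℝ)⁻¹ * hτh.eigenvalues (g, r).2))
        = (Fintype.card G : ℝ)⁻¹
            * (∑ r : nR, hτh.eigenvalues r * Real.logb 2 (hτh.eigenvalues r))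
          + (Fintype.card G : ℝ)⁻¹ * Real.logb 2 (Fintype.card G : ℝ)⁻¹ := by
      intro g
      rw [Finset.sum_congr rfl fun r _ => hpt g r, Finset.sum_add_distrib, ← Finset.mul_sum,
        ← Finset.mul_sum, hsum1, mul_one]
    rw [Finset.sum_congr rfl fun g _ => hinner g, Finset.sum_const, Finset.card_univ,
      nsmul_eq_mul, Real.logb_inv]
    field_simp
    ring
  rw [eAC, eAR, eACR, hSC, hSCR]
  simp only [relEntAsym]
  ring
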